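/- (Lemma 5.1, second part) Assume that no union of fewer than 2^{ℵ₀} null subsets of 2^ω covers 2^ω (i.e., cov(𝒩) = 2^{ℵ₀}). Then there exists a strongly meager set X ⊆ 2^ω of cardinality 2^{ℵ₀}. -/

import Mathlib

open MeasureTheory Pointwise

/-- The standard product (Haar) probability measure on the Cantor space
`2^ω = ℕ → ZMod 2`, normalized so that the whole space has measure `1`. -/
noncomputable def cantorMeasure : Measure (ℕ → ZMod 2) :=
  Measure.addHaarMeasure
    ⟨⟨Set.univ, isCompact_univ⟩, by rw [interior_univ]; exact Set.univ_nonempty⟩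

section Aux

open Filter Set Cardinal

/-- `0` is not isolated in the Cantor group. -/
instance cantorAux_neBot : (nhdsWithin (0 : ℕ → ZMod 2) {0}ᶜ).NeBot := by
  rw [← mem_closure_iff_nhdsWithin_neBot]
  have h : Filter.Tendsto (fun n : ℕ => (fun m => if m = n then (1:ZMod 2) else 0 : ℕ → ZMod 2))
      Filter.atTop (nhds 0) := by
    rw [tendsto_pi_nhds]
    intro m
    apply tendsto_nhds_of_eventually_eq
    filter_upwards [Filter.eventually_gt_atTop m] with n hn
    have hmn : ¬ m = n := by omega
    simp [hmn]
  refine mem_closure_of_tendsto h ?_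
  filter_upwards with n
  simp only [Set.mem_compl_iff, Set.mem_singleton_iff]
  intro h
  have := congrFun h n
  simp at this

instance cantorAux_isAddHaar : cantorMeasure.IsAddHaarMeasure := by
  unfold cantorMeasure; infer_instance

lemma cantorAux_add_self (a : ℕ → ZMod 2) : a + a = 0 := by
  funext n
  have : ∀ z : ZMod 2, z + z = 0 := by decide
  exact this _

lemma cantorAux_translate (a : ℕ → ZMod 2) (s : Set (ℕ → ZMod 2)) :
    cantorMeasure ({a} + s) = cantorMeasure s := by
  have hinv : ∀ b : ℕ → ZMod 2, a + (a + b) = b := fun b => by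
    rw [← add_assoc, cantorAux_add_self, zero_add]
  have himg : {a} + s = (a + ·) ⁻¹' s := by
    rw [Set.singleton_add]
    exact congrFun (Set.image_eq_preimage_of_inverse hinv hinv) s
  rw [himg]
  exact measure_preimage_add _ a s

lemma cantorAux_card_measurable :
    #{t : Set (ℕ → ZMod 2) | MeasurableSet t} ≤ Cardinal.continuum := by
  have hb : #(MeasurableSpace.countableGeneratingSet (ℕ → ZMod 2)) ≤ Cardinal.continuum := by
    have : (MeasurableSpace.countableGeneratingSet (ℕ → ZMod 2)).Countable :=
      MeasurableSpace.countable_countableGeneratingSet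
    exact (Cardinal.mk_le_aleph0_iff.mpr this).trans Cardinal.aleph0_lt_continuum.le
  have hgen := (MeasurableSpace.generateFrom_countableGeneratingSet
    (α := ℕ → ZMod 2))
  have := MeasurableSpace.cardinal_measurableSet_le_continuum hb
  convert this using 3
  rw [hgen]

end Aux

/-- Lemma 5.1, second part: if no union of fewer than `2^ℵ₀` null subsets of `2^ω` covers
`2^ω` (i.e. `cov(𝒩) = 2^ℵ₀`), then there is a strongly meager set `X ⊆ 2^ω` of
cardinality `2^ℵ₀`. -/
theorem exists_stronglyMeager_of_size_continuum_of_cov_null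
    (hcov : ∀ 𝒜 : Set (Set (ℕ → ZMod 2)), (∀ H ∈ 𝒜, cantorMeasure H = 0) →
      Cardinal.mk 𝒜 < Cardinal.continuum → ⋃₀ 𝒜 ≠ Set.univ)
    : ∃ X : Set (ℕ → ZMod 2), Cardinal.mk X = Cardinal.continuum ∧
      ∀ H : Set (ℕ → ZMod 2), cantorMeasure H = 0 → X + H ≠ Set.univ := by
  classical
  haveI : NoAtoms cantorMeasure := Measure.IsAddHaarMeasure.nullSingletonClass _
  have hsingle : ∀ a : ℕ → ZMod 2, cantorMeasure {a} = 0 := fun a => measure_singleton a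
  -- a choice function picking a point outside a small family of null sets
  obtain ⟨pick, hpick⟩ : ∃ pick : Set (Set (ℕ → ZMod 2)) → (ℕ → ZMod 2),
      ∀ 𝒜 : Set (Set (ℕ → ZMod 2)), (∀ H ∈ 𝒜, cantorMeasure H = 0) →
        Cardinal.mk 𝒜 < Cardinal.continuum → ∀ H ∈ 𝒜, pick 𝒜 ∉ H := by
    have step : ∀ 𝒜 : Set (Set (ℕ → ZMod 2)),
        ((∀ H ∈ 𝒜, cantorMeasure H = 0) ∧ Cardinal.mk 𝒜 < Cardinal.continuum) →
        ∃ p, ∀ H ∈ 𝒜, p ∉ H := by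
      rintro 𝒜 ⟨h0, hc⟩
      have hne := hcov 𝒜 h0 hc
      obtain ⟨p, hp⟩ := (Set.ne_univ_iff_exists_notMem _).mp hne
      exact ⟨p, fun H hH hpH => hp (Set.mem_sUnion.mpr ⟨H, hH, hpH⟩)⟩
    refine ⟨fun 𝒜 => if h : (∀ H ∈ 𝒜, cantorMeasure H = 0) ∧
        Cardinal.mk 𝒜 < Cardinal.continuum then (step 𝒜 h).choose else 0, ?_⟩
    intro 𝒜 h0 hc H hH
    dsimp only
    rw [dif_pos ⟨h0, hc⟩]
    exact (step 𝒜 ⟨h0, hc⟩).choose_spec H hH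
  -- the family of measurable null sets, of size at most continuum
  set 𝒩 : Set (Set (ℕ → ZMod 2)) := {H | MeasurableSet H ∧ cantorMeasure H = 0} with h𝒩
  have h𝒩card : Cardinal.mk 𝒩 ≤ Cardinal.continuum :=
    (Cardinal.mk_le_mk_of_subset (fun H hH => hH.1)).trans cantorAux_card_measurable
  -- enumerate it by the initial ordinal of the continuum
  set I := Cardinal.continuum.ord.ToType with hI
  have hIcard : Cardinal.mk I = Cardinal.continuum := Cardinal.mk_ord_toType _
  obtain ⟨e, he1, he2⟩ : ∃ e : I → Set (ℕ → ZMod 2),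
      (∀ i, e i ∈ 𝒩) ∧ ∀ H ∈ 𝒩, ∃ i, e i = H := by
    have hle : Cardinal.mk 𝒩 ≤ Cardinal.mk I := by rw [hIcard]; exact h𝒩card
    obtain ⟨g⟩ := hle
    refine ⟨fun i => if h : ∃ A : 𝒩, g A = i then ((h.choose : 𝒩) : Set (ℕ → ZMod 2)) else ∅,
      ?_, ?_⟩
    · intro i
      dsimp only
      by_cases h : ∃ A : 𝒩, g A = i
      · rw [dif_pos h]; exact h.choose.2
      · rw [dif_neg h]; exact ⟨MeasurableSet.empty, measure_empty⟩
    · intro H hH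
      refine ⟨g ⟨H, hH⟩, ?_⟩
      have h : ∃ A : 𝒩, g A = g ⟨H, hH⟩ := ⟨⟨H, hH⟩, rfl⟩
      dsimp only
      rw [dif_pos h]
      have := g.injective h.choose_spec
      rw [this]
  -- the transfinite construction
  have hIiolt : ∀ i : I, Cardinal.mk (Set.Iio i) < Cardinal.continuum := fun i =>
    Cardinal.mk_Iio_ord_toType i
  let A1 : (i : I) → (I → (ℕ → ZMod 2)) → Set (Set (ℕ → ZMod 2)) := fun i x =>
    Set.range (fun j : Set.Iio i => {x j.1} + e i)
  let A2 : (i : I) → (I → (ℕ → ZMod 2)) → (I → (ℕ → ZMod 2)) → Set (Set (ℕ → ZMod 2)) :=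
    fun i t x =>
      insert ({t i} + e i)
        ((Set.range fun j : Set.Iio i => {t j.1} + e j.1) ∪
          (Set.range fun j : Set.Iio i => ({x j.1} : Set (ℕ → ZMod 2))))
  let F : ∀ i : I, (∀ j : I, j < i → ((ℕ → ZMod 2) × (ℕ → ZMod 2))) →
      ((ℕ → ZMod 2) × (ℕ → ZMod 2)) := fun i rec =>
    let xr : I → (ℕ → ZMod 2) := fun j => if h : j < i then (rec j h).2 else 0
    let tr : I → (ℕ → ZMod 2) := fun j => if h : j < i then (rec j h).1 else pick (A1 i xr)
    (pick (A1 i xr), pick (A2 i tr xr))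
  let f : I → ((ℕ → ZMod 2) × (ℕ → ZMod 2)) :=
    (wellFounded_lt (α := I)).fix F
  have hfeq : ∀ i, f i = F i (fun j _ => f j) := fun i =>
    WellFounded.fix_eq _ F i
  set t : I → (ℕ → ZMod 2) := fun i => (f i).1 with ht0
  set x : I → (ℕ → ZMod 2) := fun i => (f i).2 with hx0
  -- unfold the recursion
  have hxr : ∀ i : I, (fun j => if h : j < i then ((fun j _ => f j) j h).2 else 0) =
      fun j => if _ : j < i then x j else 0 := fun i => rfl
  have htA1 : ∀ i, t i = pick (A1 i (fun j => if _ : j < i then x j else 0)) := by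
    intro i
    have := hfeq i
    have h1 : t i = (F i (fun j _ => f j)).1 := by rw [ht0]; simp only [this]
    exact h1
  have hxA2 : ∀ i, x i = pick (A2 i
      (fun j => if _ : j < i then t j else pick (A1 i (fun j => if _ : j < i then x j else 0)))
      (fun j => if _ : j < i then x j else 0)) := by
    intro i
    have := hfeq i
    have h1 : x i = (F i (fun j _ => f j)).2 := by rw [hx0]; simp only [this]
    exact h1
  -- properties of A1
  have hA1null : ∀ i (xf : I → (ℕ → ZMod 2)), ∀ H ∈ A1 i xf, cantorMeasure H = 0 := by
    rintro i xf H ⟨j, rfl⟩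
    rw [cantorAux_translate]
    exact (he1 i).2
  have hA1card : ∀ i (xf : I → (ℕ → ZMod 2)), Cardinal.mk (A1 i xf) < Cardinal.continuum :=
    fun i xf => lt_of_le_of_lt (Cardinal.mk_range_le) (hIiolt i)
  -- properties of A2
  have hA2null : ∀ i (tf xf : I → (ℕ → ZMod 2)), ∀ H ∈ A2 i tf xf, cantorMeasure H = 0 := by
    rintro i tf xf H hH
    rcases hH with rfl | (⟨j, rfl⟩ | ⟨j, rfl⟩)
    · rw [cantorAux_translate]; exact (he1 i).2
    · rw [cantorAux_translate]; exact (he1 j.1).2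
    · exact hsingle _
  have hA2card : ∀ i (tf xf : I → (ℕ → ZMod 2)),
      Cardinal.mk (A2 i tf xf) < Cardinal.continuum := by
    intro i tf xf
    have h1 : Cardinal.mk ((Set.range fun j : Set.Iio i => {tf j.1} + e j.1) ∪
        (Set.range fun j : Set.Iio i => ({xf j.1} : Set (ℕ → ZMod 2))) :
        Set (Set (ℕ → ZMod 2))) < Cardinal.continuum := by
      refine lt_of_le_of_lt (Cardinal.mk_union_le _ _) ?_
      exact Cardinal.add_lt_of_lt Cardinal.aleph0_le_continuum
        (lt_of_le_of_lt Cardinal.mk_range_le (hIiolt i))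
        (lt_of_le_of_lt Cardinal.mk_range_le (hIiolt i))
    refine lt_of_le_of_lt (Cardinal.mk_insert_le) ?_
    exact Cardinal.add_lt_of_lt Cardinal.aleph0_le_continuum h1
      (Cardinal.one_lt_aleph0.trans Cardinal.aleph0_lt_continuum)
  -- the key combinatorial properties
  have hT : ∀ i : I, ∀ j : I, j < i → t i ∉ {x j} + e i := by
    intro i j hj
    have hspec := hpick _ (hA1null i (fun j => if _ : j < i then x j else 0))
      (hA1card i (fun j => if _ : j < i then x j else 0))
      ({(if _ : j < i then x j else 0)} + e i) ⟨⟨j, hj⟩, rfl⟩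
    rw [← htA1 i] at hspec
    rwa [dif_pos hj] at hspec
  have hXspec : ∀ i : I,
      (x i ∉ {t i} + e i) ∧ (∀ j : I, j < i → x i ∉ {t j} + e j) ∧
        (∀ j : I, j < i → x i ≠ x j) := by
    intro i
    set xf : I → (ℕ → ZMod 2) := fun j => if _ : j < i then x j else 0 with hxf
    set tf : I → (ℕ → ZMod 2) := fun j => if _ : j < i then t j else pick (A1 i xf) with htf
    have hspec := hpick (A2 i tf xf) (hA2null i tf xf) (hA2card i tf xf)
    rw [← hxA2 i] at hspec
    have htfi : tf i = t i := by
      have h1 : tf i = pick (A1 i xf) := dif_neg (lt_irrefl i)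
      rw [h1, htA1 i]
    refine ⟨?_, ?_, ?_⟩
    · have := hspec ({tf i} + e i) (Set.mem_insert _ _)
      rwa [htfi] at this
    · intro j hj
      have := hspec ({tf j} + e j) (Set.mem_insert_of_mem _ (Set.mem_union_left _ ⟨⟨j, hj⟩, rfl⟩))
      rwa [show tf j = t j from dif_pos hj] at this
    · intro j hj
      have := hspec ({xf j} : Set (ℕ → ZMod 2))
        (Set.mem_insert_of_mem _ (Set.mem_union_right _ ⟨⟨j, hj⟩, rfl⟩))
      rw [show xf j = x j from dif_pos hj] at this
      simpa using this
  -- the strongly meager set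
  refine ⟨Set.range x, ?_, ?_⟩
  · have hinj : Function.Injective x := by
      intro i j hij
      rcases lt_trichotomy i j with h | h | h
      · exact absurd hij.symm ((hXspec j).2.2 i h)
      · exact h
      · exact absurd hij ((hXspec i).2.2 j h)
    rw [Cardinal.mk_range_eq x hinj, hIcard]
  · intro H hH hcontra
    obtain ⟨H', hHH', hH'm, hH'0⟩ := exists_measurable_superset_of_null hH
    obtain ⟨i, hei⟩ := he2 H' ⟨hH'm, hH'0⟩
    have hti : t i ∈ Set.range x + H := hcontra ▸ Set.mem_univ (t i)
    obtain ⟨a, ⟨j, rfl⟩, h, hhH, hsum⟩ := Set.mem_add.mp hti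
    have hhe : h ∈ e i := hei ▸ hHH' hhH
    rcases lt_or_ge j i with hj | hj
    · exact hT i j hj (Set.mem_add.mpr ⟨x j, rfl, h, hhe, hsum⟩)
    · -- i ≤ j : x j avoids {t i} + e i
      have hxj : x j ∈ {t i} + e i := by
        refine Set.mem_add.mpr ⟨t i, rfl, h, hhe, ?_⟩
        have : x j + h + h = t i + h := by rw [hsum]
        rw [add_assoc, cantorAux_add_self, add_zero] at this
        exact this.symm
      rcases lt_or_eq_of_le hj with hj' | hj'
      · exact (hXspec j).2.1 i hj' hxj
      · rw [← hj'] at hxj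
        exact (hXspec i).1 hxj
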